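/- Let V be a module over a Lie algebra G = Vir ⊕ (Vir⊗t) (the truncated Virasoro algebra Vir⊗ℂ[t]/⟨t²⟩), with d'_j denoting d_j⊗t. If for some a ∈ ℂ and n ∈ ℕ one has (d'_0 − a)^n·V = 0, then for every j ≠ 0 and every 0 ≤ r ≤ n, (d'_j)^r·(d'_0 − a)^{n−r}·V = 0. -/
import Mathlib

/-- In any ring, if `[D,x] = y` and `y` commutes with `x`, then
`[D, x^(m+1)] = (m+1) • (y * x^m)`. -/
lemma ad_pow_aux {R : Type*} [Ring R] (D x y : R) (hDx : D * x - x * D = y)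
    (hxy : Commute y x) : ∀ m : ℕ, D * x ^ (m + 1) - x ^ (m + 1) * D = (m + 1) • (y * x ^ m) := by
  intro m
  induction m with
  | zero => simpa using hDx
  | succ m ih =>
    have hyx : y * x ^ (m + 1) = x * (y * x ^ m) := by
      rw [pow_succ']
      rw [← mul_assoc, hxy.eq, mul_assoc]
    have hDx' : D * x = y + x * D := sub_eq_iff_eq_add.mp hDx
    have e2 : D * x ^ (m + 1) = x ^ (m + 1) * D + (m + 1) • (y * x ^ m) :=
      sub_eq_iff_eq_add'.mp ih
    have e1 : D * x ^ (m + 2) = y * x ^ (m + 1) + x * (D * x ^ (m + 1)) := by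
      rw [pow_succ' x (m + 1), ← mul_assoc, hDx', add_mul, mul_assoc]
    rw [e1, e2, mul_add, ← mul_assoc, ← pow_succ' x (m + 1), mul_smul_comm, ← hyx]
    rw [succ_nsmul (y * x ^ (m + 1)) (m + 1)]
    abel

theorem truncated_virasoro_nilpotency_propagation
    (V : Type*) [AddCommGroup V] [Module ℂ V]
    (d d' : ℤ → Module.End ℂ V) (c' : Module.End ℂ V) (a : ℂ) (n : ℕ)
    (hdd' : ∀ i j : ℤ, d i * d' j - d' j * d i
      = (((j : ℂ) - (i : ℂ))) • d' (i + j)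
        + (if i + j = 0 then (((i : ℂ) ^ 3 - (i : ℂ)) / 12) else 0) • c')
    (hd'd' : ∀ i j : ℤ, d' i * d' j = d' j * d' i)
    (hc'd' : ∀ i : ℤ, d' i * c' = c' * d' i)
    (hc'd : ∀ i : ℤ, d i * c' = c' * d i)
    (h : (d' 0 - a • (1 : Module.End ℂ V)) ^ n = 0) :
    ∀ j : ℤ, j ≠ 0 → ∀ r : ℕ, r ≤ n →
      (d' j) ^ r * (d' 0 - a • (1 : Module.End ℂ V)) ^ (n - r) = 0 := by
  intro j hj
  set X := d' 0 - a • (1 : Module.End ℂ V) with hXdef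
  set Y := d' j with hYdef
  set D := d j with hDdef
  -- D commutes with Y
  have hDY : Commute D Y := by
    have h2 : j + j ≠ 0 := by omega
    have := hdd' j j
    rw [if_neg h2] at this
    simp only [sub_self, zero_smul, smul_zero, zero_add, zero_smul, add_zero] at this
    exact (sub_eq_zero.mp this)
  -- [D, X] = (-j) • Y
  have hDX : D * X - X * D = (-(j : ℂ)) • Y := by
    have h0 : j + 0 ≠ 0 := by omega
    have := hdd' j 0
    rw [if_neg h0] at this
    simp only [Int.cast_zero, zero_sub, add_zero, zero_smul, add_zero] at this
    have hsm : D * (a • (1 : Module.End ℂ V)) = (a • (1 : Module.End ℂ V)) * D := by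
      simp [mul_smul_comm, smul_mul_assoc]
    rw [hXdef, mul_sub, sub_mul, hsm, sub_sub_sub_cancel_right]
    exact this
  -- Y commutes with X
  have hYX : Commute ((-(j : ℂ)) • Y) X := by
    have hy : Commute Y X := by
      rw [hXdef, hYdef]
      refine Commute.sub_right ?_ ?_
      · exact hd'd' j 0
      · simp [Commute, SemiconjBy, mul_smul_comm, smul_mul_assoc]
    exact hy.smul_left _
  intro r hr
  induction r with
  | zero => simpa using h
  | succ r ih =>
    have ihr := ih (by omega)
    have hm : n - r = (n - (r + 1)) + 1 := by omega
    set m := n - (r + 1) with hmdef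
    rw [hm] at ihr
    have hDYr : Commute D (Y ^ r) := hDY.pow_right r
    have key : Y ^ r * (D * X ^ (m + 1) - X ^ (m + 1) * D) = 0 := by
      have : Y ^ r * (D * X ^ (m + 1) - X ^ (m + 1) * D)
          = D * (Y ^ r * X ^ (m + 1)) - (Y ^ r * X ^ (m + 1)) * D := by
        rw [mul_sub, ← mul_assoc, ← hDYr.eq, mul_assoc, mul_assoc]
      rw [this, ihr]
      simp
    rw [ad_pow_aux D X ((-(j : ℂ)) • Y) hDX hYX m] at key
    -- Rearrange key
    have key2 : (((m : ℂ) + 1) * (-(j : ℂ))) • (Y ^ (r + 1) * X ^ m) = 0 := by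
      have e : Y ^ r * ((m + 1) • ((-(j : ℂ)) • Y * X ^ m))
          = (((m : ℂ) + 1) * (-(j : ℂ))) • (Y ^ (r + 1) * X ^ m) := by
        rw [smul_mul_assoc, mul_smul_comm, mul_smul_comm, ← mul_assoc, ← pow_succ]
        rw [← Nat.cast_smul_eq_nsmul ℂ, smul_smul]
        push_cast
        ring_nf
      rw [← e, key]
    have hc : (((m : ℂ) + 1) * (-(j : ℂ))) ≠ 0 := by
      apply mul_ne_zero
      · exact_mod_cast Nat.succ_ne_zero m
      · simpa using (fun hh : (j : ℂ) = 0 => hj (by exact_mod_cast hh))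
    calc Y ^ (r + 1) * X ^ (n - (r + 1))
        = (((m : ℂ) + 1) * (-(j : ℂ)))⁻¹ •
            ((((m : ℂ) + 1) * (-(j : ℂ))) • (Y ^ (r + 1) * X ^ m)) := by
          rw [smul_smul, inv_mul_cancel₀ hc, one_smul]
      _ = 0 := by rw [key2, smul_zero]
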